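/- Let G be a finite group and let M and N be finite-dimensional modules over the group algebra ℂ[G] (the monoid algebra of G over ℂ). Then every ℂ[G]-linear map M → N is zero if and only if every ℂ-linear map M → N commuting with the action on M and N of every element of the center Z(ℂ[G]) of ℂ[G] is zero. -/

import Mathlib

universe u


/-- A two-sided ideal of a semisimple ring is generated by a central idempotent. -/
theorem exists_central_gen {R : Type*} [Ring R] [IsSemisimpleRing R]
    (I : Ideal R) (hI : ∀ x ∈ I, ∀ r : R, x * r ∈ I) :
    ∃ e : R, e ∈ I ∧ (∀ r : R, e * r = r * e) ∧ (∀ x ∈ I, x * e = x) := by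
  obtain ⟨J, hJ⟩ := exists_isCompl I
  have h1 : (1 : R) ∈ I ⊔ J := by rw [hJ.sup_eq_top]; trivial
  obtain ⟨e, he, f, hf, hef⟩ := Submodule.mem_sup.1 h1
  have key1 : ∀ x ∈ I, x * e = x := by
    intro x hx
    have hxf : x * f = 0 := by
      have h1 : x * f ∈ I := by
        have : x * f = x - x * e := by
          have h := congrArg (fun t => t - x * e) (show x * e + x * f = x by rw [← mul_add, hef, mul_one])
          simpa using h
        rw [this]
        exact sub_mem hx (I.smul_mem x he)
      have h2 : x * f ∈ J := J.smul_mem x hf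
      have := hJ.disjoint.le_bot (Submodule.mem_inf.2 ⟨h1, h2⟩)
      simpa using this
    have : x * e + x * f = x := by rw [← mul_add, hef, mul_one]
    rw [hxf, add_zero] at this
    exact this
  have he2 : e * e = e := key1 e he
  have key3 : ∀ r : R, (e * r) * e = e * r := fun r => key1 _ (hI e he r)
  refine ⟨e, he, fun r => ?_, key1⟩
  -- show e * r = r * e
  set x := r * e - e * r with hxdef
  have hxI : x ∈ I := sub_mem (I.smul_mem r he) (hI e he r)
  have hex : e * x = 0 := by
    have h1 : e * (r * e) = e * r := by rw [← mul_assoc]; exact key3 r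
    have h2 : e * (e * r) = e * r := by rw [← mul_assoc, he2]
    rw [hxdef, mul_sub, h1, h2, sub_self]
  -- the "nilpotent right ideal" trick
  set P : Set R := {y : R | ∃ c, (c ∈ I ∧ e * c = 0) ∧ ∃ s, y = c * s} with hP
  set K : Submodule R R := Submodule.span R P with hK
  have gen_mul : ∀ c₁ ∈ I, e * c₁ = 0 → ∀ (s₁ : R), ∀ c₂ ∈ I, e * c₂ = 0 →
      ∀ (s₂ : R), (c₁ * s₁) * (c₂ * s₂) = 0 := by
    intro c₁ hc₁ hec₁ s₁ c₂ hc₂ hec₂ s₂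
    have h1 : (c₁ * s₁) * e = c₁ * s₁ := key1 _ (hI c₁ hc₁ s₁)
    have : (c₁ * s₁) * c₂ = 0 := by
      calc (c₁ * s₁) * c₂ = ((c₁ * s₁) * e) * c₂ := by rw [h1]
        _ = (c₁ * s₁) * (e * c₂) := by rw [mul_assoc]
        _ = 0 := by rw [hec₂, mul_zero]
    rw [← mul_assoc, this, zero_mul]
  have keyK : ∀ q ∈ K, ∀ c ∈ I, e * c = 0 → ∀ s : R, (c * s) * q = 0 := by
    intro q hq
    induction hq using Submodule.span_induction with
    | mem y hy =>
      obtain ⟨c₂, ⟨hc₂, hec₂⟩, s₂, rfl⟩ := hy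
      intro c hc hec s
      exact gen_mul c hc hec s c₂ hc₂ hec₂ s₂
    | zero => intro c hc hec s; rw [mul_zero]
    | add y z _ _ hy hz =>
      intro c hc hec s
      rw [mul_add, hy c hc hec s, hz c hc hec s, add_zero]
    | smul r y _ hy =>
      intro c hc hec s
      have heq : (c * s) * (r • y) = (c * (s * r)) * y := by
        rw [smul_eq_mul, mul_assoc, ← mul_assoc s r y, ← mul_assoc]
      rw [heq, hy c hc hec (s * r)]
  have KK : ∀ p ∈ K, ∀ q ∈ K, p * q = 0 := by
    intro p hp
    induction hp using Submodule.span_induction with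
    | mem y hy =>
      obtain ⟨c, ⟨hc, hec⟩, s, rfl⟩ := hy
      intro q hq
      exact keyK q hq c hc hec s
    | zero => intro q hq; rw [zero_mul]
    | add y z _ _ hy hz => intro q hq; rw [add_mul, hy q hq, hz q hq, add_zero]
    | smul r y _ hy => intro q hq; rw [smul_eq_mul, mul_assoc, hy q hq, mul_zero]
  have hKbot : ∀ p ∈ K, p = 0 := by
    obtain ⟨K', hK'⟩ := exists_isCompl K
    have h1 : (1 : R) ∈ K ⊔ K' := by rw [hK'.sup_eq_top]; trivial
    obtain ⟨k, hk, k', hk', hkk'⟩ := Submodule.mem_sup.1 h1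
    intro p hp
    have h2 : p * k = 0 := KK p hp k hk
    have h3 : p = p * k' := by
      have : p * k + p * k' = p := by rw [← mul_add, hkk', mul_one]
      rw [h2, zero_add] at this
      exact this.symm
    have h4 : p ∈ K' := h3 ▸ K'.smul_mem p hk'
    have := hK'.disjoint.le_bot (Submodule.mem_inf.2 ⟨hp, h4⟩)
    simpa using this
  have hxK : x ∈ K := Submodule.subset_span ⟨x, ⟨hxI, hex⟩, 1, (mul_one x).symm⟩
  have := hKbot x hxK
  rw [hxdef] at this
  exact (sub_eq_zero.1 this).symm
theorem exists_central_separator {R : Type*} [Ring R] [IsSemisimpleRing R]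
    {M N : Type*} [AddCommGroup M] [AddCommGroup N] [Module R M] [Module R N]
    (h : ∀ f : M →ₗ[R] N, f = 0) :
    ∃ z : R, (∀ r : R, z * r = r * z) ∧ (∀ m : M, z • m = m) ∧ (∀ n : N, z • n = 0) := by
  have hIM : ∀ x ∈ Module.annihilator R M, ∀ r : R, x * r ∈ Module.annihilator R M := by
    intro x hx r
    rw [Module.mem_annihilator] at hx ⊢
    intro m
    rw [mul_smul]
    exact hx _
  have hIN : ∀ x ∈ Module.annihilator R N, ∀ r : R, x * r ∈ Module.annihilator R N := by
    intro x hx r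
    rw [Module.mem_annihilator] at hx ⊢
    intro n
    rw [mul_smul]
    exact hx _
  obtain ⟨a, haM, hacen, haI⟩ := exists_central_gen _ hIM
  obtain ⟨b, hbN, hbcen, hbI⟩ := exists_central_gen _ hIN
  have haa : a * a = a := haI a haM
  have hbb : b * b = b := hbI b hbN
  set c : R := a + b - a * b with hcdef
  have hca : c * a = a := by
    have h1 : b * a = a * b := hbcen a
    have h2 : a * b * a = a * b := by
      rw [mul_assoc, h1, ← mul_assoc, haa]
    rw [hcdef, sub_mul, add_mul, haa, h1, h2]
    abel
  have hcb : c * b = b := by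
    have h2 : a * b * b = a * b := by rw [mul_assoc, hbb]
    rw [hcdef, sub_mul, add_mul, hbb, h2]
    abel
  have hc1 : c = 1 := by
    by_contra hc
    -- build a nonzero map M →ₗ[R] N, contradiction
    have h1c : (1 : R) - c ≠ 0 := sub_ne_zero.2 (Ne.symm hc)
    set L : Submodule R R := Submodule.span R {(1 : R) - c} with hLdef
    have hLa : ∀ x ∈ L, x * a = 0 := by
      intro x hx
      obtain ⟨r, rfl⟩ := Submodule.mem_span_singleton.1 hx
      rw [smul_eq_mul, mul_assoc, sub_mul, one_mul, hca, sub_self, mul_zero]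
    have hLb : ∀ x ∈ L, x * b = 0 := by
      intro x hx
      obtain ⟨r, rfl⟩ := Submodule.mem_span_singleton.1 hx
      rw [smul_eq_mul, mul_assoc, sub_mul, one_mul, hcb, sub_self, mul_zero]
    have hLne : L ≠ ⊥ := by
      intro hbot
      have hm : (1:R) - c ∈ L := Submodule.mem_span_singleton_self _
      rw [hbot, Submodule.mem_bot] at hm
      exact h1c hm
    obtain ⟨L₀, hL₀le, hL₀⟩ :=
      (IsSemisimpleModule.eq_bot_or_exists_simple_le L).resolve_left hLne
    haveI := hL₀
    have : Nontrivial L₀ := IsSimpleModule.nontrivial R L₀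
    obtain ⟨x₀, hx₀⟩ := exists_ne (0 : L₀)
    have hx₀M : (x₀ : R) ∉ Module.annihilator R M := by
      intro hmem
      have h0 : (x₀ : R) * a = 0 := hLa _ (hL₀le x₀.2)
      have hz : (x₀ : R) = 0 := by rw [← haI _ hmem, h0]
      exact hx₀ (ZeroMemClass.coe_eq_zero.1 hz)
    have hx₀N : (x₀ : R) ∉ Module.annihilator R N := by
      intro hmem
      have h0 : (x₀ : R) * b = 0 := hLb _ (hL₀le x₀.2)
      have hz : (x₀ : R) = 0 := by rw [← hbI _ hmem, h0]
      exact hx₀ (ZeroMemClass.coe_eq_zero.1 hz)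
    rw [Module.mem_annihilator] at hx₀M hx₀N
    push_neg at hx₀M hx₀N
    obtain ⟨m₀, hm₀⟩ := hx₀M
    obtain ⟨n₀, hn₀⟩ := hx₀N
    set μ : L₀ →ₗ[R] M := (LinearMap.toSpanSingleton R M m₀).comp L₀.subtype with hμdef
    have hμx₀ : μ x₀ ≠ 0 := by
      simpa [hμdef, LinearMap.toSpanSingleton_apply] using hm₀
    have hker : LinearMap.ker μ = ⊥ := by
      refine (eq_bot_or_eq_top (LinearMap.ker μ)).resolve_right ?_
      intro htop
      exact hμx₀ (htop ▸ Submodule.mem_top : x₀ ∈ LinearMap.ker μ)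
    have hinj : Function.Injective μ := LinearMap.ker_eq_bot.1 hker
    set eT := LinearEquiv.ofInjective μ hinj with heTdef
    obtain ⟨T', hT'⟩ := exists_isCompl (LinearMap.range μ)
    set π := Submodule.linearProjOfIsCompl _ T' hT' with hπdef
    set F : M →ₗ[R] N :=
      ((LinearMap.toSpanSingleton R N n₀).comp L₀.subtype).comp
        ((eT.symm : ↥(LinearMap.range μ) →ₗ[R] L₀).comp π) with hFdef
    have hF0 := h F
    apply hn₀
    have step1 : π (μ x₀) = eT x₀ := by
      have : μ x₀ = ((eT x₀ : ↥(LinearMap.range μ)) : M) := by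
        rw [heTdef, LinearEquiv.ofInjective_apply]
      rw [this]
      exact Submodule.linearProjOfIsCompl_apply_left hT' _
    have : F (μ x₀) = (x₀ : R) • n₀ := by
      rw [hFdef]
      simp only [LinearMap.comp_apply, LinearEquiv.coe_coe]
      rw [step1, LinearEquiv.symm_apply_apply]
      simp [LinearMap.toSpanSingleton_apply]
    rw [← this, hF0]
    simp
  -- now c = 1
  refine ⟨1 - a, fun r => ?_, fun m => ?_, fun n => ?_⟩
  · rw [sub_mul, mul_sub, one_mul, mul_one, hacen]
  · have ha0 : a • m = 0 := Module.mem_annihilator.1 haM m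
    rw [sub_smul, one_smul, ha0, sub_zero]
  · have hb0 : b • n = 0 := Module.mem_annihilator.1 hbN n
    have hab0 : (a * b) • n = 0 := by rw [mul_smul, hb0, smul_zero]
    have hn : a • n = n := by
      have : c • n = n := by rw [hc1, one_smul]
      rw [hcdef] at this
      rw [sub_smul, add_smul, hab0, sub_zero, hb0, add_zero] at this
      exact this
    rw [sub_smul, one_smul, hn, sub_self]

open MonoidAlgebra

noncomputable def mapUp (G : Type u) [Group G] :
    MonoidAlgebra ℂ G →+* MonoidAlgebra (ULift.{u} ℂ) G :=
  liftNCRingHom (singleOneRingHom.comp (ULift.ringEquiv (R := ℂ)).symm.toRingHom)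
    (of (ULift.{u} ℂ) G) (by
      intro x y
      show Commute (MonoidAlgebra.single 1 (ULift.up x)) (MonoidAlgebra.single y 1)
      unfold Commute SemiconjBy
      rw [MonoidAlgebra.single_mul_single, MonoidAlgebra.single_mul_single,
        one_mul, mul_one, one_mul, mul_one])

noncomputable def mapDown (G : Type u) [Group G] :
    MonoidAlgebra (ULift.{u} ℂ) G →+* MonoidAlgebra ℂ G :=
  liftNCRingHom (singleOneRingHom.comp (ULift.ringEquiv (R := ℂ)).toRingHom)
    (of ℂ G) (by
      intro x y
      show Commute (MonoidAlgebra.single 1 x.down) (MonoidAlgebra.single y 1)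
      unfold Commute SemiconjBy
      rw [MonoidAlgebra.single_mul_single, MonoidAlgebra.single_mul_single,
        one_mul, mul_one, one_mul, mul_one])

theorem mapUp_single (G : Type u) [Group G] (g : G) (x : ℂ) :
    mapUp G (MonoidAlgebra.single g x) = MonoidAlgebra.single g (ULift.up x) := by
  unfold mapUp liftNCRingHom
  show MonoidAlgebra.liftNC _ _ _ = _
  rw [MonoidAlgebra.liftNC_single]
  show MonoidAlgebra.single (1:G) (ULift.up x) * MonoidAlgebra.single g (1 : ULift.{u} ℂ) = _
  rw [MonoidAlgebra.single_mul_single, one_mul, mul_one]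

theorem mapDown_single (G : Type u) [Group G] (g : G) (x : ULift.{u} ℂ) :
    mapDown G (MonoidAlgebra.single g x) = MonoidAlgebra.single g x.down := by
  unfold mapDown liftNCRingHom
  show MonoidAlgebra.liftNC _ _ _ = _
  rw [MonoidAlgebra.liftNC_single]
  show MonoidAlgebra.single (1:G) x.down * MonoidAlgebra.single g (1 : ℂ) = _
  rw [MonoidAlgebra.single_mul_single, one_mul, mul_one]

noncomputable def upDownEquiv (G : Type u) [Group G] :
    MonoidAlgebra (ULift.{u} ℂ) G ≃+* MonoidAlgebra ℂ G :=
  RingEquiv.ofRingHom (mapDown G) (mapUp G)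
    (by
      apply MonoidAlgebra.ringHom_ext <;> intro b <;>
        simp [mapDown_single, mapUp_single] <;> rfl)
    (by
      apply MonoidAlgebra.ringHom_ext <;> intro b <;>
        simp [mapDown_single, mapUp_single] <;> rfl)

theorem myIsSemisimple (G : Type u) [Group G] [Finite G] :
    IsSemisimpleRing (MonoidAlgebra ℂ G) := by
  cases nonempty_fintype G
  haveI : CharZero (ULift.{u} ℂ) :=
    ⟨fun a b hab => by
      have := congrArg ULift.down hab
      simpa using this⟩
  haveI : NeZero ((Fintype.card G : ULift.{u} ℂ)) :=
    ⟨Nat.cast_ne_zero.2 Fintype.card_ne_zero⟩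
  haveI : IsSemisimpleRing (MonoidAlgebra (ULift.{u} ℂ) G) := inferInstance
  exact (upDownEquiv G).isSemisimpleRing

/-- For finite-dimensional modules `M`, `N` over the group algebra `ℂ[G]` of a finite
group `G`, every `ℂ[G]`-linear map `M → N` is zero if and only if every `ℂ`-linear map
`M → N` commuting with the action of every element of the center `Z(ℂ[G])` is zero. -/
theorem hom_zero_iff_center_hom_zero
    (G : Type*) [Group G] [Finite G]
    (M N : Type*) [AddCommGroup M] [AddCommGroup N]
    [Module (MonoidAlgebra ℂ G) M] [Module (MonoidAlgebra ℂ G) N]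
    [Module ℂ M] [Module ℂ N]
    [IsScalarTower ℂ (MonoidAlgebra ℂ G) M] [IsScalarTower ℂ (MonoidAlgebra ℂ G) N]
    [Module.Finite (MonoidAlgebra ℂ G) M] [Module.Finite (MonoidAlgebra ℂ G) N] :
    (∀ f : M →ₗ[MonoidAlgebra ℂ G] N, f = 0) ↔
      (∀ f : M →ₗ[ℂ] N,
        (∀ z ∈ Subalgebra.center ℂ (MonoidAlgebra ℂ G), ∀ m : M, f (z • m) = z • f m) →
          f = 0) := by
  constructor
  · intro h f hf
    haveI : IsSemisimpleRing (MonoidAlgebra ℂ G) := myIsSemisimple G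
    obtain ⟨z, hzc, hzM, hzN⟩ := exists_central_separator h
    have hz : z ∈ Subalgebra.center ℂ (MonoidAlgebra ℂ G) :=
      Subalgebra.mem_center_iff.2 fun b => (hzc b).symm
    ext m
    have : f m = 0 := by
      calc f m = f (z • m) := by rw [hzM]
        _ = z • f m := hf z hz m
        _ = 0 := hzN _
    simpa using this
  · intro h f
    have hcomm : ∀ z ∈ Subalgebra.center ℂ (MonoidAlgebra ℂ G), ∀ m : M,
        (f.restrictScalars ℂ) (z • m) = z • (f.restrictScalars ℂ) m := by
      intro z _ m
      exact f.map_smul z m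
    have h0 := h (f.restrictScalars ℂ) hcomm
    ext m
    exact DFunLike.congr_fun h0 m
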